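/- arXiv:2301.11224 — 4 statements merged into one kernel-verified Lean document; each statement's English description precedes it below -/
import Mathlib

section
/- Let G be a profinite group, H a closed subgroup of G, and φ : H → A a continuous homomorphism to a finite group A. Then there exists an open subgroup U of G containing H and a continuous homomorphism ψ : U → A with ψ restricted to H equal to φ. -/
/-- A continuous homomorphism from a closed subgroup of a profinite group to a
finite group extends to an open subgroup. -/
theorem lift_from_closed_to_open
    {G : Type*} [Group G] [TopologicalSpace G] [IsTopologicalGroup G]
    [CompactSpace G] [T2Space G] [TotallyDisconnectedSpace G]
    {A : Type*} [Group A] [Finite A] [TopologicalSpace A] [DiscreteTopology A]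
    (H : Subgroup G) (hH : IsClosed (H : Set G))
    (φ : H →* A) (hφ : Continuous φ) :
    ∃ U : Subgroup G, IsOpen (U : Set G) ∧ H ≤ U ∧
      ∃ ψ : U →* A, Continuous ψ ∧
        ∀ (g : G) (hgH : g ∈ H) (hgU : g ∈ U), ψ ⟨g, hgU⟩ = φ ⟨g, hgH⟩ := by
  -- the kernel of φ is open in H
  have hker : IsOpen ((φ ⁻¹' {1}) : Set H) := (isOpen_discrete _).preimage hφ
  obtain ⟨W, hWopen, hW⟩ := isOpen_induced_iff.mp hker
  have h1W : (1 : G) ∈ W := by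
    have : ((1 : H) : G) ∈ W := by
      have : (1 : H) ∈ (Subtype.val ⁻¹' W : Set H) := by
        rw [hW]; simp
      exact this
    simpa using this
  obtain ⟨V, hVclopen, h1V, hVW⟩ := compact_exists_isClopen_in_isOpen hWopen h1W
  obtain ⟨N, hNV⟩ :=
    IsTopologicalGroup.exist_openNormalSubgroup_sub_clopen_nhds_of_one hVclopen h1V
  -- U = H ⊔ N
  set U : Subgroup G := H ⊔ (N : Subgroup G) with hU
  have hNopen : IsOpen ((N : Subgroup G) : Set G) := N.toOpenSubgroup.isOpen
  have hUopen : IsOpen (U : Set G) := Subgroup.isOpen_mono le_sup_right hNopen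
  have hHU : H ≤ U := le_sup_left
  -- H ∩ N ≤ ker φ
  have hsub : (N : Subgroup G).subgroupOf H ≤ φ.ker := by
    intro x hx
    have hxW : (x : G) ∈ W := hVW (hNV hx)
    have : x ∈ (Subtype.val ⁻¹' W : Set H) := hxW
    rw [hW] at this
    exact this
  haveI : ((N : Subgroup G)).Normal := N.isNormal'
  let e := QuotientGroup.quotientInfEquivProdNormalQuotient H (N : Subgroup G)
  let φ' : H ⧸ (N : Subgroup G).subgroupOf H →* A := QuotientGroup.lift _ φ hsub
  let ψ : U →* A :=
    φ'.comp (e.symm.toMonoidHom.comp (QuotientGroup.mk' ((N : Subgroup G).subgroupOf U)))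
  -- N (viewed in U) is contained in ker ψ
  have hNker : ∀ u : U, (u : G) ∈ (N : Subgroup G) → ψ u = 1 := by
    intro u hu
    have h1 : (QuotientGroup.mk u : U ⧸ (N : Subgroup G).subgroupOf U) = 1 :=
      (QuotientGroup.eq_one_iff u).mpr hu
    simp [ψ, h1]
  have hNU : (N : Subgroup G).subgroupOf U ≤ ψ.ker := fun u hu => hNker u hu
  -- ψ is continuous
  have hNUopen : IsOpen (((N : Subgroup G).subgroupOf U : Subgroup U) : Set U) :=
    hNopen.preimage continuous_subtype_val
  have hψcont : Continuous ψ := by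
    apply continuous_of_continuousAt_one ψ
    intro s hs
    have h1s : (1 : A) ∈ s := by simpa [map_one] using mem_of_mem_nhds hs
    rw [Filter.mem_map]
    refine Filter.mem_of_superset
      (hNUopen.mem_nhds (Subgroup.one_mem _)) ?_
    intro u hu
    have hu1 : ψ u = 1 := hNker u hu
    simpa [Set.mem_preimage, hu1] using h1s
  refine ⟨U, hUopen, hHU, ψ, hψcont, ?_⟩
  intro g hgH hgU
  have he : e (QuotientGroup.mk (⟨g, hgH⟩ : H)) =
      QuotientGroup.mk (⟨g, hgU⟩ : U) := rfl
  have : e.symm (QuotientGroup.mk (⟨g, hgU⟩ : U)) = QuotientGroup.mk (⟨g, hgH⟩ : H) := by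
    rw [← he, MulEquiv.symm_apply_apply]
  exact (congrArg φ' this).trans rfl
end

section
/- Let G be a profinite group and U a finite-index subgroup of G. Then U equals the union of all closed subgroups of G that are topologically finitely generated and contained in U. -/
private theorem aux_closure_le
    {G : Type*} [Group G] [TopologicalSpace G] [IsTopologicalGroup G]
    [CompactSpace G] [T2Space G]
    (U : Subgroup G) (hU : U.FiniteIndex) (x : G) (hx : x ∈ U) :
    (Subgroup.closure ({x} : Set G)).topologicalClosure ≤ U := by
  classical
  haveI := hU
  set N := U.normalCore with hN
  haveI : N.FiniteIndex := inferInstance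
  set m := N.index with hm
  have hm0 : m ≠ 0 := Subgroup.FiniteIndex.index_ne_zero
  set C : Set G := (fun g : G => g ^ m) '' Set.univ with hC
  have hCclosed : IsClosed C :=
    (CompactSpace.isCompact_univ.image (continuous_pow m)).isClosed
  set F : Set G := ⋃ i ∈ Finset.range m, (fun c => x ^ i * c) '' C with hF
  have hFclosed : IsClosed F := by
    apply Set.Finite.isClosed_biUnion (Finset.range m).finite_toSet
    intro i _
    exact (Homeomorph.mulLeft (x ^ i)).isClosedMap _ hCclosed
  have hsub : (Subgroup.closure ({x} : Set G) : Set G) ⊆ F := by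
    intro g hg
    rw [SetLike.mem_coe, Subgroup.mem_closure_singleton] at hg
    obtain ⟨n, rfl⟩ := hg
    have hmpos : 0 < (m : ℤ) := by
      exact_mod_cast Nat.pos_of_ne_zero hm0
    have hr0 : 0 ≤ n % m := Int.emod_nonneg n (by exact_mod_cast hm0)
    have hrlt : n % m < m := Int.emod_lt_of_pos n hmpos
    have hdecomp : x ^ n = x ^ ((n % m).toNat) * (x ^ (n / m)) ^ m := by
      rw [← zpow_natCast (x ^ (n / (m:ℤ))) m, ← zpow_mul, ← zpow_natCast x,
        Int.toNat_of_nonneg hr0, ← zpow_add]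
      congr 1
      rw [mul_comm]
      exact (Int.emod_add_mul_ediv n m).symm
    rw [hdecomp]
    have hi : (n % m).toNat ∈ Finset.range m := by
      simp only [Finset.mem_range]; omega
    exact Set.mem_biUnion hi ⟨(x ^ (n / (m:ℤ))) ^ m,
      ⟨x ^ (n / (m:ℤ)), Set.mem_univ _, rfl⟩, rfl⟩
  have hFU : F ⊆ (U : Set G) := by
    intro g hg
    simp only [hF, Set.mem_iUnion, Set.mem_image] at hg
    obtain ⟨i, -, c, ⟨k, -, rfl⟩, rfl⟩ := hg
    exact U.mul_mem (U.pow_mem hx i) (U.normalCore_le (Subgroup.pow_index_mem N k))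
  intro g hg
  have hg' : g ∈ closure (Subgroup.closure ({x} : Set G) : Set G) := hg
  exact hFU ((hFclosed.closure_subset_iff.mpr hsub) hg')

/-- A finite-index subgroup of a profinite group is the union of the topologically
finitely generated closed subgroups contained in it. -/
theorem finiteIndex_subgroup_eq_union_of_fg_closed
    {G : Type*} [Group G] [TopologicalSpace G] [IsTopologicalGroup G]
    [CompactSpace G] [T2Space G] [TotallyDisconnectedSpace G]
    (U : Subgroup G) (hU : U.FiniteIndex) (x : G) :
    x ∈ U ↔ ∃ H : Subgroup G, IsClosed (H : Set G) ∧
      (∃ S : Finset G, (Subgroup.closure (S : Set G)).topologicalClosure = H) ∧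
      H ≤ U ∧ x ∈ H := by
  constructor
  · intro hx
    refine ⟨(Subgroup.closure ({x} : Set G)).topologicalClosure,
      Subgroup.isClosed_topologicalClosure _, ⟨{x}, by simp⟩,
      aux_closure_le U hU x hx, ?_⟩
    exact (Subgroup.le_topologicalClosure _) (Subgroup.subset_closure rfl)
  · rintro ⟨H, -, -, hHU, hxH⟩
    exact hHU hxH
end

section
/- Let G be a profinite group and suppose that for some surjection of finite groups α : B → A, every continuous homomorphism from every open subgroup of G to A lifts to a continuous homomorphism to B through α. Then the same lifting property holds for every closed subgroup of G: every continuous homomorphism from a closed subgroup H of G to A lifts to a continuous homomorphism H → B through α. -/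
open Pointwise

/-- If every continuous homomorphism from every open subgroup of a profinite group `G`
to a finite group `A` lifts continuously through a surjection `α : B → A`, then the same
holds for every closed subgroup of `G`. -/
theorem lifting_open_to_closed
    {G : Type*} [Group G] [TopologicalSpace G] [IsTopologicalGroup G]
    [CompactSpace G] [T2Space G] [TotallyDisconnectedSpace G]
    {A B : Type*} [Group A] [Finite A] [TopologicalSpace A] [DiscreteTopology A]
    [Group B] [Finite B] [TopologicalSpace B] [DiscreteTopology B]
    (α : B →* A) (hα : Function.Surjective α)
    (hopen : ∀ U : Subgroup G, IsOpen (U : Set G) →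
      ∀ φ : U →* A, Continuous φ → ∃ ψ : U →* B, Continuous ψ ∧ α.comp ψ = φ) :
    ∀ H : Subgroup G, IsClosed (H : Set G) →
      ∀ φ : H →* A, Continuous φ → ∃ ψ : H →* B, Continuous ψ ∧ α.comp ψ = φ := by
  intro H hH φ hφ
  -- the kernel of φ is open in H
  have hker : IsOpen ((φ ⁻¹' {1}) : Set H) := hφ.isOpen_preimage _ (isOpen_discrete _)
  rw [isOpen_induced_iff] at hker
  obtain ⟨W, hW, hWker⟩ := hker
  have h1W : (1 : G) ∈ W := by
    have : (1 : H) ∈ Subtype.val ⁻¹' W := by rw [hWker]; simp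
    exact this
  obtain ⟨C, hC, h1C, hCW⟩ := compact_exists_isClopen_in_isOpen hW h1W
  obtain ⟨N, hN⟩ := IsTopologicalGroup.exist_openNormalSubgroup_sub_clopen_nhds_of_one hC h1C
  -- U = H ⊔ N is open
  set U : Subgroup G := H ⊔ N.toSubgroup with hU
  have hUopen : IsOpen (U : Set G) :=
    Subgroup.isOpen_mono le_sup_right N.isOpen
  have hHU : H ≤ U := le_sup_left
  set M : Subgroup U := N.toSubgroup.subgroupOf U with hM
  haveI : M.Normal := Subgroup.normal_subgroupOf
  set ι : H →* U := Subgroup.inclusion hHU with hι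
  set θ : H →* U ⧸ M := (QuotientGroup.mk' M).comp ι with hθ
  -- θ is surjective
  have hθsurj : Function.Surjective θ := by
    intro x
    induction x using QuotientGroup.induction_on with
    | H u =>
      have hu : (u : G) ∈ (H : Set G) * (N.toSubgroup : Set G) := by
        rw [← Subgroup.mul_normal H N.toSubgroup]
        exact u.2
      obtain ⟨h, hh, n, hn, hrw⟩ := hu
      refine ⟨⟨h, hh⟩, ?_⟩
      show QuotientGroup.mk (ι ⟨h, hh⟩) = QuotientGroup.mk u
      rw [QuotientGroup.eq]
      show h⁻¹ * (u : G) ∈ N.toSubgroup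
      rw [← hrw]
      simpa [inv_mul_cancel_left] using hn
  -- ker θ ≤ ker φ
  have hkerle : θ.ker ≤ φ.ker := by
    intro x hx
    have hxN : (x : G) ∈ N.toSubgroup := by
      have h2 := hx
      rw [MonoidHom.mem_ker, MonoidHom.comp_apply, ← MonoidHom.mem_ker,
        QuotientGroup.ker_mk'] at h2
      exact h2
    have hxW : (x : G) ∈ W := hCW (hN hxN)
    have : x ∈ φ ⁻¹' {1} := by rw [← hWker]; exact hxW
    simpa [MonoidHom.mem_ker] using this
  -- lift φ to U ⧸ M
  set lam : U ⧸ M →* A :=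
    θ.liftOfRightInverse (Function.surjInv hθsurj)
      (Function.rightInverse_surjInv hθsurj) ⟨φ, hkerle⟩ with hlam
  have hlamθ : ∀ x : H, lam (θ x) = φ x := fun x =>
    θ.liftOfRightInverse_comp_apply _ _ ⟨φ, hkerle⟩ x
  set Φ : U →* A := lam.comp (QuotientGroup.mk' M) with hΦ
  -- Φ is continuous
  have hMopen : IsOpen (M : Set U) :=
    IsOpen.preimage continuous_subtype_val N.isOpen
  have hΦcont : Continuous Φ := by
    rw [continuous_discrete_rng]
    intro a
    rw [isOpen_iff_forall_mem_open]
    intro u hu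
    refine ⟨(fun v => u⁻¹ * v) ⁻¹' (M : Set U), ?_, ?_, ?_⟩
    · intro v hv
      have : QuotientGroup.mk (s := M) u = QuotientGroup.mk v := by
        rw [QuotientGroup.eq]; exact hv
      have : Φ u = Φ v := by
        show lam (QuotientGroup.mk u) = lam (QuotientGroup.mk v)
        rw [this]
      simpa [← this] using hu
    · exact (continuous_const.mul continuous_id).isOpen_preimage _ hMopen
    · simp [Subgroup.one_mem]
  obtain ⟨ψU, hψUcont, hψUcomp⟩ := hopen U hUopen Φ hΦcont
  refine ⟨ψU.comp ι, ?_, ?_⟩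
  · exact hψUcont.comp (Continuous.subtype_mk continuous_subtype_val _)
  · ext x
    have : α (ψU (ι x)) = Φ (ι x) := by rw [← hψUcomp]; rfl
    simp only [MonoidHom.comp_apply]
    rw [this]
    show lam (θ x) = φ x
    exact hlamθ x
end

section
/- Let G be an abstract group, A a finite abelian group regarded as a trivial module, and 1 → A → C → G → 1 an extension of abstract groups such that C is residually finite and the profinite topology of C induces the full topology on A (i.e., for every subgroup A' ≤ A there is a finite-index subgroup of C meeting A in A'). Then applying profinite completion yields an exact sequence 1 → A → Ĉ → Ĝ → 1. -/
/-- `i : G →* Ghat` exhibits the profinite group `Ghat` as the profinite completion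
of the abstract group `G`: every homomorphism from `G` to a finite (discrete) group
factors uniquely through a continuous homomorphism from `Ghat`. -/
def IsProfiniteCompletion {G : Type*} [Group G] {Ghat : Type*} [Group Ghat]
    [TopologicalSpace Ghat] [IsTopologicalGroup Ghat] [CompactSpace Ghat]
    [T2Space Ghat] [TotallyDisconnectedSpace Ghat] (i : G →* Ghat) : Prop :=
  ∀ (A : Type) [Group A] [Finite A] [TopologicalSpace A] [DiscreteTopology A]
    (f : G →* A), ∃! fhat : Ghat →* A, Continuous fhat ∧ fhat.comp i = f

section Helpers

/-- `Equiv.optionCongr` as a monoid hom between permutation groups. -/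
private def optionPermHom (α : Type*) : Equiv.Perm α →* Equiv.Perm (Option α) where
  toFun e := e.optionCongr
  map_one' := Equiv.optionCongr_one
  map_mul' e f := by
    ext x
    cases x <;> simp [Equiv.Perm.mul_apply]

/-- Linderholm's trick: for any subgroup `R` of `Q` there are two homomorphisms into a
permutation group of a (finite if `Q` is) set which agree exactly on `R`. -/
private lemma linderholm {Q : Type*} [Group Q] (R : Subgroup Q) :
    ∃ φ ψ : Q →* Equiv.Perm (Option (Q ⧸ R)),
      (∀ r ∈ R, φ r = ψ r) ∧ ∀ g ∉ R, φ g ≠ ψ g := by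
  classical
  set e1 : Q ⧸ R := QuotientGroup.mk 1 with he1
  set σ : Equiv.Perm (Option (Q ⧸ R)) := Equiv.swap none (some e1) with hσ
  set φ : Q →* Equiv.Perm (Option (Q ⧸ R)) :=
    (optionPermHom (Q ⧸ R)).comp (MulAction.toPermHom Q (Q ⧸ R)) with hφ
  have hφ_none : ∀ g : Q, φ g none = none := fun g => rfl
  have hφ_some : ∀ (g : Q) (y : Q ⧸ R), φ g (some y) = some (g • y) := fun g y => rfl
  have hmk_eq_e1 : ∀ h : Q, h ∈ R → (QuotientGroup.mk h : Q ⧸ R) = e1 := by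
    intro h hh
    rw [he1]
    exact QuotientGroup.eq.2 (by simpa using R.inv_mem hh)
  have hmk_ne_e1 : ∀ h : Q, h ∉ R → (QuotientGroup.mk h : Q ⧸ R) ≠ e1 := by
    intro h hh heq
    rw [he1] at heq
    exact hh (by simpa using R.inv_mem (QuotientGroup.eq.1 heq))
  have hσ_none : σ none = some e1 := Equiv.swap_apply_left _ _
  have hσ_e1 : σ (some e1) = none := Equiv.swap_apply_right _ _
  have hσ_fix : ∀ y : Q ⧸ R, y ≠ e1 → σ (some y) = some y := fun y hy =>
    Equiv.swap_apply_of_ne_of_ne (by simp) (by simpa using hy)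
  have hσ_inv : σ⁻¹ = σ := by rw [hσ]; exact Equiv.swap_inv _ _
  refine ⟨φ, ((MulAut.conj σ).toMonoidHom).comp φ, ?_, ?_⟩
  · intro r hr
    have comm : σ * φ r = φ r * σ := by
      refine Equiv.ext fun x => ?_
      rcases x with _ | y
      · rw [Equiv.Perm.mul_apply, Equiv.Perm.mul_apply, hφ_none, hσ_none, hφ_some]
        have h0 : r • e1 = e1 := by
          rw [he1, MulAction.Quotient.smul_mk]
          exact hmk_eq_e1 _ (by simpa using hr)
        rw [h0]
      · obtain ⟨h, rfl⟩ := QuotientGroup.mk_surjective y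
        have hsmul : r • (QuotientGroup.mk h : Q ⧸ R) = QuotientGroup.mk (r * h) := by
          rw [MulAction.Quotient.smul_mk]; rfl
        by_cases hh : h ∈ R
        · have h1 := hmk_eq_e1 h hh
          have h2 : r • (QuotientGroup.mk h : Q ⧸ R) = e1 := by
            rw [hsmul]; exact hmk_eq_e1 _ (R.mul_mem hr hh)
          rw [Equiv.Perm.mul_apply, Equiv.Perm.mul_apply, hφ_some, h2, hσ_e1, h1, hσ_e1,
            hφ_none]
        · have h1 := hmk_ne_e1 h hh
          have h2 : r • (QuotientGroup.mk h : Q ⧸ R) ≠ e1 := by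
            rw [hsmul]
            exact hmk_ne_e1 _ fun hm => hh (by simpa using R.mul_mem (R.inv_mem hr) hm)
          rw [Equiv.Perm.mul_apply, Equiv.Perm.mul_apply, hφ_some, hσ_fix _ h2, hσ_fix _ h1,
            hφ_some]
    simp only [MonoidHom.comp_apply, MulEquiv.coe_toMonoidHom, MulAut.conj_apply]
    rw [comm, mul_assoc, mul_inv_cancel, mul_one]
  · intro g hg hEq
    have heval : φ g (some e1) = ((MulAut.conj σ).toMonoidHom.comp φ) g (some e1) := by
      rw [hEq]
    rw [hφ_some] at heval
    simp only [MonoidHom.comp_apply, MulEquiv.coe_toMonoidHom, MulAut.conj_apply] at heval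
    rw [Equiv.Perm.mul_apply, Equiv.Perm.mul_apply, hσ_inv, hσ_e1, hφ_none, hσ_none] at heval
    have hx : g • e1 = e1 := Option.some_injective _ heval
    rw [he1, MulAction.Quotient.smul_mk] at hx
    have hmem : (g • (1 : Q))⁻¹ * 1 ∈ R := QuotientGroup.eq.1 hx
    exact hg (by simpa [smul_eq_mul] using R.inv_mem hmem)

variable {G : Type*} [Group G] {Ghat : Type*} [Group Ghat]
    [TopologicalSpace Ghat] [IsTopologicalGroup Ghat] [CompactSpace Ghat]
    [T2Space Ghat] [TotallyDisconnectedSpace Ghat]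

/-- Universe-polymorphic version of the universal property. -/
private theorem IsProfiniteCompletion.univ {i : G →* Ghat}
    (hi : IsProfiniteCompletion i) (A : Type*) [Group A] [Finite A] [TopologicalSpace A]
    [DiscreteTopology A] (f : G →* A) :
    ∃! fhat : Ghat →* A, Continuous fhat ∧ fhat.comp i = f := by
  classical
  letI : TopologicalSpace (Shrink.{0} A) := ⊥
  haveI : DiscreteTopology (Shrink.{0} A) := ⟨rfl⟩
  haveI : Finite (Shrink.{0} A) := Finite.of_equiv A (equivShrink.{0} A)
  let me : Shrink.{0} A ≃* A := Shrink.mulEquiv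
  obtain ⟨g, ⟨gcont, geq⟩, guniq⟩ := hi (Shrink.{0} A) (me.symm.toMonoidHom.comp f)
  refine ⟨me.toMonoidHom.comp g, ⟨?_, ?_⟩, ?_⟩
  · exact (continuous_of_discreteTopology : Continuous (⇑me)).comp gcont
  · ext x
    have h1 : g (i x) = me.symm (f x) :=
      congrFun (congrArg (fun h : G →* Shrink.{0} A => ⇑h) geq) x
    simp only [MonoidHom.comp_apply]
    rw [h1]
    simp
  · rintro F ⟨Fcont, Feq⟩
    have h2 : me.symm.toMonoidHom.comp F = g := by
      apply guniq
      refine ⟨(continuous_of_discreteTopology : Continuous (⇑me.symm)).comp Fcont, ?_⟩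
      ext x
      have h3 : F (i x) = f x :=
        congrFun (congrArg (fun h : G →* A => ⇑h) Feq) x
      simp only [MonoidHom.comp_apply]
      rw [h3]
    ext x
    have h4 : me.symm (F x) = g x :=
      congrFun (congrArg (fun h : Ghat →* Shrink.{0} A => ⇑h) h2) x
    simp only [MonoidHom.comp_apply]
    rw [← h4]
    simp

/-- Separation by an open normal subgroup in a profinite group. -/
private lemma sep_openNormal {K : Set Ghat} (hK : IsClosed K) {x : Ghat} (hx : x ∉ K) :
    ∃ N : OpenNormalSubgroup Ghat, ∀ k ∈ K, ∀ n ∈ N.toSubgroup, x ≠ k * n := by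
  have hU : IsOpen ((fun y => x * y) ⁻¹' Kᶜ) :=
    hK.isOpen_compl.preimage (continuous_mul_left x)
  have h1 : (1 : Ghat) ∈ (fun y => x * y) ⁻¹' Kᶜ := by simpa using hx
  obtain ⟨V, hV, h1V, hVU⟩ := compact_exists_isClopen_in_isOpen hU h1
  obtain ⟨N, hN⟩ := IsTopologicalGroup.exist_openNormalSubgroup_sub_clopen_nhds_of_one hV h1V
  refine ⟨N, fun k hk n hn h => ?_⟩
  have hmem : x * n⁻¹ ∈ Kᶜ := hVU (hN (N.toSubgroup.inv_mem hn))
  apply hmem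
  rw [h, mul_assoc, mul_inv_cancel, mul_one]
  exact hk

/-- If a continuous hom to a finite discrete group maps the image of the completion map
into a subgroup `R`, then it maps everything into `R`. -/
private lemma range_le_of_comp_le {i : G →* Ghat} (hi : IsProfiniteCompletion i)
    {Q : Type*} [Group Q] [Finite Q] [TopologicalSpace Q] [DiscreteTopology Q]
    (q : Ghat →* Q) (hq : Continuous q) (R : Subgroup Q) (h : ∀ g, q (i g) ∈ R) :
    ∀ x, q x ∈ R := by
  obtain ⟨φ, ψ, hagree, hdiff⟩ := linderholm R
  letI : TopologicalSpace (Equiv.Perm (Option (Q ⧸ R))) := ⊥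
  haveI : DiscreteTopology (Equiv.Perm (Option (Q ⧸ R))) := ⟨rfl⟩
  haveI : Finite (Q ⧸ R) := Quotient.finite _
  haveI : Fintype (Q ⧸ R) := Fintype.ofFinite _
  haveI : Finite (Equiv.Perm (Option (Q ⧸ R))) := Equiv.finite_left
  have hcompeq : (φ.comp q).comp i = (ψ.comp q).comp i :=
    MonoidHom.ext fun g => hagree _ (h g)
  obtain ⟨F, _, hFuniq⟩ := hi.univ _ ((φ.comp q).comp i)
  have h1 : φ.comp q = F :=
    hFuniq _ ⟨(continuous_of_discreteTopology : Continuous (⇑φ)).comp hq, rfl⟩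
  have h2 : ψ.comp q = F :=
    hFuniq _ ⟨(continuous_of_discreteTopology : Continuous (⇑ψ)).comp hq, hcompeq.symm⟩
  intro x
  by_contra hx
  exact hdiff (q x) hx (by
    have := congrFun (congrArg (fun h : Ghat →* _ => ⇑h) (h1.trans h2.symm)) x
    simpa using this)

/-- Continuity of the quotient map by an open normal subgroup, with discrete topology
on the quotient. -/
private lemma continuous_mk' (N : Subgroup Ghat) [N.Normal] (hN : IsOpen (N : Set Ghat))
    {τ : TopologicalSpace (Ghat ⧸ N)} (hτ : DiscreteTopology (Ghat ⧸ N)) :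
    Continuous (QuotientGroup.mk' N) := by
  rw [continuous_discrete_rng]
  intro b
  obtain ⟨g, rfl⟩ := QuotientGroup.mk'_surjective N b
  have hset : (QuotientGroup.mk' N) ⁻¹' {QuotientGroup.mk' N g} = (fun x => g⁻¹ * x) ⁻¹' N := by
    ext x
    simp only [Set.mem_preimage, Set.mem_singleton_iff, QuotientGroup.mk'_apply,
      SetLike.mem_coe]
    rw [QuotientGroup.eq]
    constructor
    · intro hx
      simpa [mul_inv_rev] using N.inv_mem hx
    · intro hx
      simpa [mul_inv_rev] using N.inv_mem hx
  rw [hset]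
  exact hN.preimage (continuous_const.mul continuous_id)

end Helpers

/-- For an extension `1 → A → C → G → 1` with `A` finite abelian, `C` residually finite
and the profinite topology of `C` inducing the full topology on `A`, profinite completion
yields an exact sequence `1 → A → Ĉ → Ĝ → 1`. -/
theorem completion_of_extension_exact
    {A C G : Type*} [CommGroup A] [Finite A] [Group C] [Group G]
    (ι : A →* C) (π : C →* G)
    (hι : Function.Injective ι) (hπ : Function.Surjective π)
    (hexact : π.ker = ι.range)
    (hres : ∀ c : C, c ≠ 1 → ∃ N : Subgroup C, N.Normal ∧ N.FiniteIndex ∧ c ∉ N)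
    (hind : ∀ A' : Subgroup A, ∃ D : Subgroup C, D.FiniteIndex ∧ Subgroup.comap ι D = A')
    {Chat : Type*} [Group Chat] [TopologicalSpace Chat] [IsTopologicalGroup Chat]
    [CompactSpace Chat] [T2Space Chat] [TotallyDisconnectedSpace Chat]
    {Ghat : Type*} [Group Ghat] [TopologicalSpace Ghat] [IsTopologicalGroup Ghat]
    [CompactSpace Ghat] [T2Space Ghat] [TotallyDisconnectedSpace Ghat]
    (iC : C →* Chat) (hiC : IsProfiniteCompletion iC)
    (iG : G →* Ghat) (hiG : IsProfiniteCompletion iG)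
    (πhat : Chat →* Ghat) (hπhatcont : Continuous πhat)
    (hπhat : πhat.comp iC = iG.comp π) :
    Function.Injective (iC.comp ι) ∧ Function.Surjective πhat ∧
      πhat.ker = (iC.comp ι).range := by
  classical
  have hπhat' : ∀ c : C, πhat (iC c) = iG (π c) := fun c =>
    congrFun (congrArg (fun h : C →* Ghat => ⇑h) hπhat) c
  -- Injectivity of `iC ∘ ι`
  have hinj : Function.Injective (iC.comp ι) := by
    rw [injective_iff_map_eq_one]
    intro a ha
    by_contra hane
    have hιa : ι a ≠ 1 := fun h => hane (hι (by simpa using h))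
    obtain ⟨N, hNnormal, hNfin, hNnotmem⟩ := hres (ι a) hιa
    haveI := hNnormal
    haveI := hNfin
    letI : TopologicalSpace (C ⧸ N) := ⊥
    haveI : DiscreteTopology (C ⧸ N) := ⟨rfl⟩
    obtain ⟨F, ⟨Fcont, Feq⟩, _⟩ := hiC.univ _ (QuotientGroup.mk' N)
    have : F (iC (ι a)) = QuotientGroup.mk' N (ι a) :=
      congrFun (congrArg (fun h : C →* C ⧸ N => ⇑h) Feq) (ι a)
    rw [show iC (ι a) = 1 from ha, map_one] at this
    exact hNnotmem ((QuotientGroup.eq_one_iff (ι a)).1 this.symm)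
  refine ⟨hinj, ?_, ?_⟩
  -- Surjectivity of `πhat`
  · by_contra hsurj
    have hex : ∃ y : Ghat, ∀ c, πhat c ≠ y := by
      by_contra h2
      push_neg at h2
      exact hsurj fun y => h2 y
    obtain ⟨y, hy⟩ := hex
    have hyP : y ∉ (πhat.range : Set Ghat) := by
      rintro ⟨c, rfl⟩
      exact hy c rfl
    have hPclosed : IsClosed (πhat.range : Set Ghat) := by
      have : (πhat.range : Set Ghat) = πhat '' Set.univ := by
        ext z; simp [MonoidHom.mem_range, eq_comm]
      rw [this]
      exact (isCompact_univ.image hπhatcont).isClosed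
    obtain ⟨N, hN⟩ := sep_openNormal hPclosed hyP
    haveI : N.toSubgroup.Normal := N.isNormal'
    letI : TopologicalSpace (Ghat ⧸ N.toSubgroup) := ⊥
    haveI : DiscreteTopology (Ghat ⧸ N.toSubgroup) := ⟨rfl⟩
    haveI : Finite (Ghat ⧸ N.toSubgroup) :=
      Subgroup.quotient_finite_of_isOpen _ N.isOpen'
    have hqcont : Continuous (QuotientGroup.mk' N.toSubgroup) :=
      continuous_mk' _ N.isOpen' ‹_›
    set q := QuotientGroup.mk' N.toSubgroup with hq
    have hkey := range_le_of_comp_le hiG q hqcont (πhat.range.map q)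
      (fun g => by
        obtain ⟨c, rfl⟩ := hπ g
        exact ⟨πhat (iC c), ⟨iC c, rfl⟩, by rw [hπhat' c]⟩)
    obtain ⟨p, hp, hpq⟩ := Subgroup.mem_map.1 (hkey y)
    obtain ⟨cp, rfl⟩ := hp
    have hmem : (πhat cp)⁻¹ * y ∈ N.toSubgroup := QuotientGroup.eq.1 (by
      simpa [hq, QuotientGroup.mk'_apply] using hpq)
    exact hN (πhat cp) ⟨cp, rfl⟩ _ hmem
      (by rw [← mul_assoc, mul_inv_cancel, one_mul])
  -- Exactness in the middle
  · have hsub : (iC.comp ι).range ≤ πhat.ker := by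
      rintro _ ⟨a, rfl⟩
      have : ι a ∈ π.ker := hexact ▸ ⟨a, rfl⟩
      simp only [MonoidHom.mem_ker, MonoidHom.comp_apply]
      rw [hπhat' (ι a), MonoidHom.mem_ker.1 this, map_one]
    refine le_antisymm ?_ hsub
    intro x hx
    by_contra hxK
    have hKfin : ((iC.comp ι).range : Set Chat).Finite := by
      have : ((iC.comp ι).range : Set Chat) = Set.range (iC.comp ι) := rfl
      rw [this]
      exact Set.finite_range _
    have hKclosed : IsClosed ((iC.comp ι).range : Set Chat) := hKfin.isClosed
    have hxK' : x ∉ ((iC.comp ι).range : Set Chat) := hxK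
    obtain ⟨N, hN⟩ := sep_openNormal hKclosed hxK'
    haveI : N.toSubgroup.Normal := N.isNormal'
    letI : TopologicalSpace (Chat ⧸ N.toSubgroup) := ⊥
    haveI : DiscreteTopology (Chat ⧸ N.toSubgroup) := ⟨rfl⟩
    haveI : Finite (Chat ⧸ N.toSubgroup) :=
      Subgroup.quotient_finite_of_isOpen _ N.isOpen'
    set q0 := QuotientGroup.mk' N.toSubgroup with hq0
    have hq0cont : Continuous q0 := continuous_mk' _ N.isOpen' ‹_›
    -- the composite `C → Chat/N` is surjective
    have hq0C_surj : Function.Surjective (q0.comp iC) := by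
      intro b
      have := range_le_of_comp_le hiC q0 hq0cont (q0.comp iC).range
        (fun c => ⟨c, rfl⟩)
      obtain ⟨g0, rfl⟩ := QuotientGroup.mk'_surjective N.toSubgroup b
      exact this g0
    -- the image of `A` in `Chat/N` and the corresponding open normal subgroup `M` of `Chat`
    set Rbar : Subgroup (Chat ⧸ N.toSubgroup) := π.ker.map (q0.comp iC) with hRbar
    haveI hRbarNormal : Rbar.Normal := Subgroup.Normal.map inferInstance _ hq0C_surj
    set M : Subgroup Chat := Rbar.comap q0 with hM
    haveI hMNormal : M.Normal := Subgroup.normal_comap q0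
    have hMopen : IsOpen (M : Set Chat) := by
      have : (M : Set Chat) = q0 ⁻¹' (Rbar : Set (Chat ⧸ N.toSubgroup)) := rfl
      rw [this]
      exact (isOpen_discrete _).preimage hq0cont
    have hKM : ∀ a : A, iC (ι a) ∈ M := by
      intro a
      exact ⟨ι a, hexact ▸ ⟨a, rfl⟩, rfl⟩
    have hxM : x ∉ M := by
      intro hmem
      obtain ⟨c, hc, hcx⟩ := hmem
      obtain ⟨a, rfl⟩ := (hexact ▸ hc : c ∈ ι.range)
      have : (iC (ι a))⁻¹ * x ∈ N.toSubgroup := QuotientGroup.eq.1 (by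
        simpa [hq0, QuotientGroup.mk'_apply] using hcx)
      exact hN (iC (ι a)) ⟨a, rfl⟩ _ this (by rw [← mul_assoc, mul_inv_cancel, one_mul])
    -- lift `Chat/M` along `π`
    letI : TopologicalSpace (Chat ⧸ M) := ⊥
    haveI : DiscreteTopology (Chat ⧸ M) := ⟨rfl⟩
    haveI : Finite (Chat ⧸ M) := Subgroup.quotient_finite_of_isOpen _ hMopen
    set q' := QuotientGroup.mk' M with hq'
    have hq'cont : Continuous q' := continuous_mk' _ hMopen ‹_›
    have hker_le : π.ker ≤ (q'.comp iC).ker := by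
      intro c hc
      obtain ⟨a, rfl⟩ := (hexact ▸ hc : c ∈ ι.range)
      simpa [MonoidHom.mem_ker, hq', QuotientGroup.mk'_apply,
        QuotientGroup.eq_one_iff] using hKM a
    set e := QuotientGroup.quotientKerEquivOfSurjective π hπ with he
    set g : G →* Chat ⧸ M :=
      (QuotientGroup.lift π.ker (q'.comp iC) hker_le).comp e.symm.toMonoidHom with hg
    have hgπ : ∀ c : C, g (π c) = q' (iC c) := by
      intro c
      have h1 : e.symm (π c) = QuotientGroup.mk c := by
        have : e (QuotientGroup.mk c) = π c := rfl
        rw [← this, MulEquiv.symm_apply_apply]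
      simp only [hg, MonoidHom.comp_apply, MulEquiv.coe_toMonoidHom, h1]
      rfl
    obtain ⟨F, ⟨Fcont, Feq⟩, _⟩ := hiG.univ _ g
    -- `F ∘ πhat = q'` by uniqueness
    obtain ⟨W, _, hWuniq⟩ := hiC.univ _ (q'.comp iC)
    have h1 : F.comp πhat = W := by
      apply hWuniq
      refine ⟨Fcont.comp hπhatcont, ?_⟩
      ext c
      simp only [MonoidHom.comp_apply]
      rw [hπhat' c, ← hgπ c]
      exact congrFun (congrArg (fun h : G →* Chat ⧸ M => ⇑h) Feq) (π c)
    have h2 : q' = W := hWuniq _ ⟨hq'cont, rfl⟩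
    have hq'x : q' x = F (πhat x) := by
      rw [h2, ← h1]; rfl
    rw [MonoidHom.mem_ker.1 hx, map_one] at hq'x
    have h5 : x ∈ M := by
      simpa [hq', QuotientGroup.mk'_apply, QuotientGroup.eq_one_iff] using hq'x
    exact hxM h5
end
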